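/- Let (g, μ, T) be a Hom-Lie algebra over a field of characteristic zero such that the twist map T is μ-equivariant and invertible. Then μ satisfies the Jacobi identity μ(x, μ(y,z)) + μ(y, μ(z,x)) + μ(z, μ(x,y)) = 0 for all x, y, z ∈ g; that is, (g, μ) is a Lie algebra. -/
import Mathlib

/-- A Hom-Lie algebra `(g, μ, T)` over a field of characteristic zero with a
`μ`-equivariant and invertible twist map `T` satisfies the Jacobi identity,
i.e. `(g, μ)` is a Lie algebra. -/
theorem homLie_equivariant_invertible_is_lie
    {F : Type*} [Field F] [CharZero F]
    {g : Type*} [AddCommGroup g] [Module F g] [FiniteDimensional F g]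
    (μ : g →ₗ[F] g →ₗ[F] g) (T : g →ₗ[F] g)
    (hskew : ∀ x y : g, μ x y = - μ y x)
    (hjac : ∀ x y z : g, μ (T x) (μ y z) + μ (T y) (μ z x) + μ (T z) (μ x y) = 0)
    (hequiv : ∀ x y : g, T (μ x y) = μ (T x) y)
    (hinv : Function.Bijective T) :
    ∀ x y z : g, μ x (μ y z) + μ y (μ z x) + μ z (μ x y) = 0 := by
  intro x y z
  apply hinv.injective
  simp only [map_add, hequiv, map_zero, hjac]
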